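/- arXiv:2601.22413 — 3 statements merged into one kernel-verified Lean document; each statement's English description precedes it below -/
import Mathlib

section
/- For all real x > 0, the exponential generating function identity holds: ∑_{k=1}^∞ H_k x^k / k! = e^x (log x + γ + E_1(x)), where H_k is the k-th harmonic number, γ is the Euler–Mascheroni constant, and E_1(x) = ∫_x^∞ e^{-t}/t dt is the exponential integral. -/
open Real MeasureTheory

/-- The `k`-th harmonic number `H_k = ∑_{j=1}^k 1/j`. -/
noncomputable def H (k : ℕ) : ℝ := ∑ j ∈ Finset.range k, (1 : ℝ) / (j + 1)

/-- The exponential integral `E_1(x) = ∫_x^∞ e^{-t}/t dt`. -/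
noncomputable def E1 (x : ℝ) : ℝ := ∫ t in Set.Ioi x, Real.exp (-t) / t

open Set Filter Topology
open scoped ENNReal NNReal

-- |log t| ≤ 2 t^(-1/2) + t for t > 0

lemma abs_log_le {t : ℝ} (ht : 0 < t) : |Real.log t| ≤ 2 * t ^ (-(1/2) : ℝ) + t := by
  rcases le_total t 1 with h1 | h1
  · have hlog : Real.log t ≤ 0 := Real.log_nonpos ht.le h1
    rw [abs_of_nonpos hlog]
    have h2 : -Real.log t = 2 * Real.log (t ^ (-(1/2) : ℝ)) := by
      rw [Real.log_rpow ht]; ring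
    have h3 : Real.log (t ^ (-(1/2) : ℝ)) ≤ t ^ (-(1/2) : ℝ) :=
      (Real.log_le_sub_one_of_pos (Real.rpow_pos_of_pos ht _)).trans (by linarith)
    nlinarith [ht.le]
  · have hlog : 0 ≤ Real.log t := Real.log_nonneg h1
    rw [abs_of_nonneg hlog]
    have h3 : Real.log t ≤ t - 1 := Real.log_le_sub_one_of_pos ht
    have : (0:ℝ) ≤ 2 * t ^ (-(1/2) : ℝ) := by positivity
    linarith

lemma int_log_Ioc {x : ℝ} (hx : 0 < x) :
    IntegrableOn (fun t => Real.exp (-t) * Real.log t) (Ioc 0 x) := by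
  have hg : IntegrableOn (fun t : ℝ => 2 * t ^ (-(1/2) : ℝ) + t) (Ioc 0 x) := by
    have h1 : IntegrableOn (fun t : ℝ => t ^ (-(1/2) : ℝ)) (Ioc 0 x) := by
      have := intervalIntegral.intervalIntegrable_rpow' (a := 0) (b := x) (r := -(1/2)) (by norm_num)
      rwa [intervalIntegrable_iff_integrableOn_Ioc_of_le hx.le] at this
    exact (h1.const_mul 2).add (continuous_id.integrableOn_Ioc)
  refine Integrable.mono' hg ?_ ?_
  · refine (ContinuousOn.aestronglyMeasurable ?_ measurableSet_Ioc)
    exact (Real.continuous_exp.comp continuous_neg).continuousOn.mul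
      (Real.continuousOn_log.mono (fun t ht => ne_of_gt ht.1))
  · refine (ae_restrict_iff' measurableSet_Ioc).2 (Filter.Eventually.of_forall fun t ht => ?_)
    have hexp : Real.exp (-t) ≤ 1 := Real.exp_le_one_iff.2 (by linarith [ht.1.le])
    have h1 : |Real.exp (-t) * Real.log t| ≤ |Real.log t| := by
      rw [abs_mul, abs_of_pos (Real.exp_pos (-t))]
      nlinarith [abs_nonneg (Real.log t)]
    exact (le_trans (by rw [Real.norm_eq_abs]; exact h1) (abs_log_le ht.1))

lemma one_sub_exp_le {t : ℝ} (ht : 0 ≤ t) : 1 - Real.exp (-t) ≤ t := by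
  nlinarith [Real.add_one_le_exp (-t)]

lemma int_quot_Ioc {x : ℝ} (hx : 0 < x) :
    IntegrableOn (fun t => (1 - Real.exp (-t)) / t) (Ioc 0 x) := by
  refine Integrable.mono' (integrable_const 1) ?_ ?_
  · refine (ContinuousOn.aestronglyMeasurable ?_ measurableSet_Ioc)
    exact ((continuous_const.sub (Real.continuous_exp.comp continuous_neg)).continuousOn).div
      continuous_id.continuousOn (fun t ht => ne_of_gt ht.1)
  · refine (ae_restrict_iff' measurableSet_Ioc).2 (Filter.Eventually.of_forall fun t ht => ?_)
    have h0 : 0 ≤ 1 - Real.exp (-t) := by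
      have : Real.exp (-t) ≤ 1 := Real.exp_le_one_iff.2 (by linarith [ht.1.le])
      linarith
    have h1 : (1 - Real.exp (-t)) / t ≤ 1 := by
      rw [div_le_one ht.1]; exact one_sub_exp_le ht.1.le
    rw [Real.norm_eq_abs, abs_of_nonneg (div_nonneg h0 ht.1.le)]
    exact h1

lemma int_exp_div_Ioi {x : ℝ} (hx : 0 < x) :
    IntegrableOn (fun t => Real.exp (-t) / t) (Ioi x) := by
  have hg : IntegrableOn (fun t : ℝ => x⁻¹ * Real.exp (-t)) (Ioi x) := by
    have := exp_neg_integrableOn_Ioi x (b := 1) one_pos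
    exact (this.congr_fun (fun t _ => by norm_num) measurableSet_Ioi).const_mul _
  refine Integrable.mono' hg ?_ ?_
  · refine (ContinuousOn.aestronglyMeasurable ?_ measurableSet_Ioi)
    exact (Real.continuous_exp.comp continuous_neg).continuousOn.div
      continuous_id.continuousOn (fun t ht => ne_of_gt (hx.trans ht))
  · refine (ae_restrict_iff' measurableSet_Ioi).2 (Filter.Eventually.of_forall fun t ht => ?_)
    have htpos : 0 < t := hx.trans ht
    rw [Real.norm_eq_abs, abs_of_nonneg (by positivity)]
    rw [div_le_iff₀ htpos]
    rw [mul_comm x⁻¹, mul_assoc]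
    have hxt : 1 ≤ x⁻¹ * t := by
      rw [← inv_mul_cancel₀ (ne_of_gt hx)]
      exact mul_le_mul_of_nonneg_left ht.le (by positivity)
    nlinarith [Real.exp_pos (-t)]

lemma int_explog_Ioi {x : ℝ} (hx : 0 < x) :
    IntegrableOn (fun t => Real.exp (-t) * Real.log t) (Ioi x) := by
  have hg : IntegrableOn (fun t : ℝ => |Real.log x| * Real.exp (-t) + Real.exp (-t) * t) (Ioi x) := by
    have h1 : IntegrableOn (fun t : ℝ => Real.exp (-t)) (Ioi x) := by
      have := exp_neg_integrableOn_Ioi x (b := 1) one_pos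
      exact this.congr_fun (fun t _ => by norm_num) measurableSet_Ioi
    have h2 : IntegrableOn (fun t : ℝ => Real.exp (-t) * t) (Ioi x) := by
      have := Real.GammaIntegral_convergent (s := 2) (by norm_num)
      have h3 := this.mono_set (Ioi_subset_Ioi hx.le)
      refine h3.congr_fun (fun t ht => ?_) measurableSet_Ioi
      rw [show (2:ℝ) - 1 = 1 by norm_num]; simp only [Real.rpow_one]
    exact (h1.const_mul _).add h2
  refine Integrable.mono' hg ?_ ?_
  · refine (ContinuousOn.aestronglyMeasurable ?_ measurableSet_Ioi)
    exact (Real.continuous_exp.comp continuous_neg).continuousOn.mul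
      (Real.continuousOn_log.mono (fun t ht => ne_of_gt (hx.trans ht)))
  · refine (ae_restrict_iff' measurableSet_Ioi).2 (Filter.Eventually.of_forall fun t ht => ?_)
    have htpos : 0 < t := hx.trans ht
    have hlog : |Real.log t| ≤ |Real.log x| + t := by
      rcases le_total 1 t with h1 | h1
      · rw [abs_of_nonneg (Real.log_nonneg h1)]
        have := Real.log_le_sub_one_of_pos htpos
        have : Real.log t ≤ t := by linarith
        have h0 : (0:ℝ) ≤ |Real.log x| := abs_nonneg _
        linarith
      · have hlt : Real.log t ≤ 0 := Real.log_nonpos htpos.le h1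
        rw [abs_of_nonpos hlt]
        have hmono : Real.log x ≤ Real.log t := Real.log_le_log hx ht.le
        have : -Real.log t ≤ -Real.log x := by linarith
        have h2 : -Real.log x ≤ |Real.log x| := neg_le_abs _
        linarith
    rw [Real.norm_eq_abs, abs_mul, abs_of_pos (Real.exp_pos (-t))]
    calc Real.exp (-t) * |Real.log t| ≤ Real.exp (-t) * (|Real.log x| + t) :=
          mul_le_mul_of_nonneg_left hlog (Real.exp_pos _).le
      _ = |Real.log x| * Real.exp (-t) + Real.exp (-t) * t := by ring

lemma gamma_int : ∫ t in Set.Ioi (0:ℝ), Real.exp (-t) * Real.log t = -Real.eulerMascheroniConstant := by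
  -- complex Gamma integral derivative at 1
  have h1 := Complex.hasDerivAt_GammaIntegral (s := 1) (by norm_num)
  have hD : (∫ t : ℝ in Ioi 0, (t:ℂ) ^ ((1:ℂ) - 1) * (Real.log t * Real.exp (-t)))
      = ((∫ t in Ioi (0:ℝ), Real.exp (-t) * Real.log t : ℝ) : ℂ) := by
    rw [show ((∫ t in Ioi (0:ℝ), Real.exp (-t) * Real.log t : ℝ) : ℂ) = ∫ t in Ioi (0:ℝ), ((Real.exp (-t) * Real.log t : ℝ) : ℂ) from (integral_ofReal).symm]
    refine setIntegral_congr_fun measurableSet_Ioi (fun t ht => ?_)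
    simp [Complex.ofReal_mul, mul_comm]
  rw [hD] at h1
  -- Gamma agrees with GammaIntegral near 1
  have h2 : HasDerivAt Complex.Gamma ((∫ t in Ioi (0:ℝ), Real.exp (-t) * Real.log t : ℝ) : ℂ) 1 := by
    refine h1.congr_of_eventuallyEq ?_
    have hopen : IsOpen {s : ℂ | 0 < s.re} := isOpen_lt continuous_const Complex.continuous_re
    filter_upwards [hopen.mem_nhds (by norm_num : (0:ℝ) < (1:ℂ).re)] with s hs
    exact Complex.Gamma_eq_integral hs
  have h3 : HasDerivAt Real.Gamma (∫ t in Ioi (0:ℝ), Real.exp (-t) * Real.log t) 1 := by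
    have := h2.real_of_complex
    simp only [Complex.ofReal_re] at this; exact this
  have h4 := Real.hasDerivAt_Gamma_one
  have := h3.unique h4
  linarith

lemma hasDerivAt_one_sub_exp (t : ℝ) :
    HasDerivAt (fun s : ℝ => 1 - Real.exp (-s)) (Real.exp (-t)) t := by
  have h := ((Real.hasDerivAt_exp (-t)).comp t (hasDerivAt_neg t)).const_sub 1
  simpa using h

lemma ftc_Ioc {x : ℝ} (hx : 0 < x) :
    ∫ t in Ioc 0 x, (Real.exp (-t) * Real.log t + (1 - Real.exp (-t)) / t)
      = (1 - Real.exp (-x)) * Real.log x := by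
  set g : ℝ → ℝ := fun t => (1 - Real.exp (-t)) * Real.log t with hg
  have hderiv : ∀ t ∈ Ioo 0 x, HasDerivAt g
      (Real.exp (-t) * Real.log t + (1 - Real.exp (-t)) / t) t := by
    intro t ht
    have h := (hasDerivAt_one_sub_exp t).mul (Real.hasDerivAt_log ht.1.ne')
    rw [div_eq_mul_inv]; exact h
  have hcont : ContinuousOn g (Icc 0 x) := by
    intro t ht
    rcases eq_or_ne t 0 with rfl | ht0
    · -- continuity at 0 via squeeze
      have hbound : ∀ s ∈ Icc (0:ℝ) x, ‖g s‖ ≤ |s * Real.log s| := by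
        intro s hs
        rcases eq_or_lt_of_le hs.1 with rfl | hspos
        · simp [hg]
        · have h1 : 0 ≤ 1 - Real.exp (-s) := by
            have : Real.exp (-s) ≤ 1 := Real.exp_le_one_iff.2 (by linarith)
            linarith
          have h2 : 1 - Real.exp (-s) ≤ s := one_sub_exp_le hs.1
          rw [hg, Real.norm_eq_abs, abs_mul, abs_mul]
          exact mul_le_mul_of_nonneg_right
            (by rw [abs_of_nonneg h1, abs_of_pos hspos]; exact h2) (abs_nonneg _)
      have hlim : Tendsto (fun s : ℝ => s * Real.log s) (𝓝[Icc 0 x] 0) (𝓝 0) := by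
        have := (Real.continuous_mul_log.tendsto 0).mono_left
          (nhdsWithin_le_nhds (s := Icc 0 x))
        simpa using this
      have hT : Tendsto g (𝓝[Icc 0 x] 0) (𝓝 0) := by
        refine squeeze_zero_norm' ?_ (by simpa using hlim.abs)
        filter_upwards [self_mem_nhdsWithin] with s hs using (hbound s hs).trans_eq (abs_mul _ _)
      have hg0 : g 0 = 0 := by simp [hg]
      unfold ContinuousWithinAt
      rw [hg0]
      exact hT
    · exact (((continuous_const.sub (Real.continuous_exp.comp continuous_neg)).continuousAt).mul
        (Real.continuousAt_log ht0)).continuousWithinAt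
  have hint : IntervalIntegrable
      (fun t => Real.exp (-t) * Real.log t + (1 - Real.exp (-t)) / t) volume 0 x := by
    rw [intervalIntegrable_iff_integrableOn_Ioc_of_le hx.le]
    exact (int_log_Ioc hx).add (int_quot_Ioc hx)
  have h := intervalIntegral.integral_eq_sub_of_hasDerivAt_of_le hx.le hcont hderiv hint
  rw [intervalIntegral.integral_of_le hx.le] at h
  rw [h]
  simp [hg]

lemma ftc_Ioi {x : ℝ} (hx : 0 < x) :
    ∫ t in Ioi x, (Real.exp (-t) * Real.log t - Real.exp (-t) / t)
      = Real.exp (-x) * Real.log x := by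
  set f : ℝ → ℝ := fun t => -(Real.exp (-t) * Real.log t) with hf
  have hderiv : ∀ t ∈ Ici x, HasDerivAt f
      (Real.exp (-t) * Real.log t - Real.exp (-t) / t) t := by
    intro t ht
    have htpos : 0 < t := lt_of_lt_of_le hx ht
    have h1 : HasDerivAt (fun s : ℝ => Real.exp (-s)) (-Real.exp (-t)) t := by
      have h := (Real.hasDerivAt_exp (-t)).comp t (hasDerivAt_neg t)
      simp at h; exact h
    have h := (h1.mul (Real.hasDerivAt_log htpos.ne')).neg
    rw [hf]
    refine h.congr_deriv ?_
    ring
  have hint : IntegrableOn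
      (fun t => Real.exp (-t) * Real.log t - Real.exp (-t) / t) (Ioi x) :=
    (int_explog_Ioi hx).sub (int_exp_div_Ioi hx)
  have htend : Tendsto f atTop (𝓝 0) := by
    have hb : Tendsto (fun t : ℝ => t ^ 1 * Real.exp (-t)) atTop (𝓝 0) :=
      Real.tendsto_pow_mul_exp_neg_atTop_nhds_zero 1
    refine squeeze_zero_norm' ?_ (by simpa using hb.abs)
    filter_upwards [eventually_ge_atTop (1:ℝ)] with t ht1
    have hlog : 0 ≤ Real.log t := Real.log_nonneg ht1
    have hlt : Real.log t ≤ t := by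
      have := Real.log_le_sub_one_of_pos (by linarith : (0:ℝ) < t)
      linarith
    rw [hf]
    simp only [norm_neg, Real.norm_eq_abs, abs_mul, abs_of_pos (Real.exp_pos (-t)),
      abs_of_nonneg hlog, pow_one]
    rw [abs_of_nonneg (by linarith : (0:ℝ) ≤ t)]
    calc Real.exp (-t) * Real.log t ≤ Real.exp (-t) * t :=
          mul_le_mul_of_nonneg_left hlt (Real.exp_pos _).le
      _ = t * Real.exp (-t) := by ring
  have h := integral_Ioi_of_hasDerivAt_of_tendsto' hderiv hint htend
  rw [h, hf]
  simp

lemma I_eq {x : ℝ} (hx : 0 < x) :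
    ∫ t in Ioc 0 x, (1 - Real.exp (-t)) / t
      = Real.log x + Real.eulerMascheroniConstant + E1 x := by
  have split : ∫ t in Set.Ioi (0:ℝ), Real.exp (-t) * Real.log t
      = (∫ t in Ioc 0 x, Real.exp (-t) * Real.log t)
        + ∫ t in Ioi x, Real.exp (-t) * Real.log t := by
    rw [← setIntegral_union (Ioc_disjoint_Ioi le_rfl) measurableSet_Ioi
      (int_log_Ioc hx) (int_explog_Ioi hx), Ioc_union_Ioi_eq_Ioi hx.le]
  have hIoc : ∫ t in Ioc 0 x, Real.exp (-t) * Real.log t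
      = (1 - Real.exp (-x)) * Real.log x - ∫ t in Ioc 0 x, (1 - Real.exp (-t)) / t := by
    have := ftc_Ioc hx
    rw [integral_add (int_log_Ioc hx) (int_quot_Ioc hx)] at this
    linarith
  have hIoi : ∫ t in Ioi x, Real.exp (-t) * Real.log t
      = Real.exp (-x) * Real.log x + E1 x := by
    have := ftc_Ioi hx
    rw [integral_sub (int_explog_Ioi hx) (int_exp_div_Ioi hx)] at this
    have hE : E1 x = ∫ t in Ioi x, Real.exp (-t) / t := rfl
    linarith
  rw [gamma_int, hIoc, hIoi] at split
  have hexp : (1 - Real.exp (-x)) * Real.log x + Real.exp (-x) * Real.log x = Real.log x := by ring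
  linarith

lemma summable_shift (y : ℝ) :
    Summable (fun k : ℕ => y ^ (k + 1) / (Nat.factorial (k + 1) : ℝ)) :=
  (Real.summable_pow_div_factorial y).comp_injective (add_left_injective 1)

lemma tsum_exp_sub_one (y : ℝ) :
    ∑' k : ℕ, y ^ (k + 1) / (Nat.factorial (k + 1) : ℝ) = Real.exp y - 1 := by
  have hexp : Real.exp y = ∑' n : ℕ, y ^ n / (Nat.factorial n : ℝ) := by
    rw [Real.exp_eq_exp_ℝ, NormedSpace.exp_eq_tsum_div]
  have h := Summable.tsum_eq_zero_add (Real.summable_pow_div_factorial y)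
  rw [← hexp] at h
  simp only [pow_zero, Nat.factorial_zero, Nat.cast_one] at h
  rw [eq_comm, sub_eq_iff_eq_add, h]
  ring

lemma integral_summand (x : ℝ) (k : ℕ) :
    ∫ t in Ioc (0:ℝ) 1, (∑ j ∈ Finset.range (k + 1), t ^ j) * (x ^ (k + 1) / (Nat.factorial (k + 1) : ℝ))
      = H (k + 1) * x ^ (k + 1) / (Nat.factorial (k + 1) : ℝ) := by
  rw [integral_mul_const]
  have h1 : ∫ t in Ioc (0:ℝ) 1, (∑ j ∈ Finset.range (k + 1), t ^ j) = H (k + 1) := by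
    rw [← intervalIntegral.integral_of_le (zero_le_one)]
    rw [intervalIntegral.integral_finset_sum]
    · unfold H
      refine Finset.sum_congr rfl fun j _ => ?_
      rw [integral_pow]
      simp
    · intro j _
      exact (continuous_pow j).intervalIntegrable 0 1
  rw [h1, mul_div_assoc]

theorem egf_harmonic (x : ℝ) (hx : 0 < x) :
    ∑' k : ℕ, H (k + 1) * x ^ (k + 1) / (Nat.factorial (k + 1)) =
      Real.exp x * (Real.log x + Real.eulerMascheroniConstant + E1 x) := by
  classical
  set f : ℕ → ℝ → ℝ :=
    fun k t => (∑ j ∈ Finset.range (k + 1), t ^ j) * (x ^ (k + 1) / (Nat.factorial (k + 1) : ℝ)) with hf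
  have hxk : ∀ k : ℕ, (0:ℝ) ≤ x ^ (k+1) / (Nat.factorial (k + 1) : ℝ) := by
    intro k; positivity
  -- swap sum and integral
  have hmeas : ∀ k, AEStronglyMeasurable (f k) (volume.restrict (Ioc (0:ℝ) 1)) := fun k =>
    (Continuous.aestronglyMeasurable (by fun_prop))
  have hsum2 : Summable (fun k : ℕ => x ^ (k + 1) / (Nat.factorial k : ℝ)) := by
    refine Summable.congr ((Real.summable_pow_div_factorial x).mul_left x) fun k => ?_
    rw [pow_succ, mul_comm (x ^ k) x, mul_div_assoc]
  have hbound : ∑' k, ∫⁻ t in Ioc (0:ℝ) 1, ‖f k t‖₊ ≠ ⊤ := by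
    have hb : ∀ k : ℕ, ∫⁻ t in Ioc (0:ℝ) 1, ‖f k t‖₊
        ≤ ENNReal.ofReal (x ^ (k + 1) / (Nat.factorial k : ℝ)) := by
      intro k
      have hptwise : ∀ t ∈ Ioc (0:ℝ) 1,
          (‖f k t‖₊ : ℝ≥0∞) ≤ ENNReal.ofReal (x ^ (k + 1) / (Nat.factorial k : ℝ)) := by
        intro t ht
        rw [← ENNReal.ofReal_coe_nnreal, coe_nnnorm]
        refine ENNReal.ofReal_le_ofReal ?_
        have hsumle : |∑ j ∈ Finset.range (k + 1), t ^ j| ≤ (k + 1 : ℝ) := by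
          have h1 : ∑ j ∈ Finset.range (k + 1), t ^ j ≤ ∑ j ∈ Finset.range (k + 1), (1:ℝ) :=
            Finset.sum_le_sum fun j _ => pow_le_one₀ ht.1.le ht.2
          have h2 : (0:ℝ) ≤ ∑ j ∈ Finset.range (k + 1), t ^ j :=
            Finset.sum_nonneg fun j _ => pow_nonneg ht.1.le j
          rw [abs_of_nonneg h2]
          simpa using h1
        rw [hf]
        simp only [Real.norm_eq_abs, abs_mul]
        rw [abs_of_nonneg (hxk k)]
        calc |∑ j ∈ Finset.range (k + 1), t ^ j| * (x ^ (k+1) / (Nat.factorial (k + 1) : ℝ))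
            ≤ (k + 1 : ℝ) * (x ^ (k+1) / (Nat.factorial (k + 1) : ℝ)) :=
              mul_le_mul_of_nonneg_right hsumle (hxk k)
          _ = x ^ (k + 1) / (Nat.factorial k : ℝ) := by
              rw [Nat.factorial_succ]
              push_cast
              have hk : ((k:ℝ) + 1) ≠ 0 := by positivity
              have hkf : ((Nat.factorial k : ℝ)) ≠ 0 := by positivity
              field_simp
      calc ∫⁻ t in Ioc (0:ℝ) 1, ‖f k t‖₊
          ≤ ∫⁻ _ in Ioc (0:ℝ) 1, ENNReal.ofReal (x ^ (k + 1) / (Nat.factorial k : ℝ)) := by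
            refine lintegral_mono_ae ?_
            exact (ae_restrict_iff' measurableSet_Ioc).2
              (Filter.Eventually.of_forall hptwise)
        _ = ENNReal.ofReal (x ^ (k + 1) / (Nat.factorial k : ℝ)) := by
            rw [lintegral_const]
            simp [Real.volume_Ioc]
    refine ne_top_of_le_ne_top ?_ (ENNReal.tsum_le_tsum hb)
    rw [← ENNReal.ofReal_tsum_of_nonneg (fun k => by positivity) hsum2]
    exact ENNReal.ofReal_ne_top
  have hswap := integral_tsum hmeas hbound
  have hLHS : ∑' k : ℕ, H (k + 1) * x ^ (k + 1) / (Nat.factorial (k + 1) : ℝ)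
      = ∫ t in Ioc (0:ℝ) 1, ∑' k, f k t := by
    rw [hswap]
    exact tsum_congr fun k => (integral_summand x k).symm
  rw [hLHS]
  -- evaluate the inner sum a.e.
  have hinner : ∫ t in Ioc (0:ℝ) 1, ∑' k, f k t
      = ∫ t in Ioc (0:ℝ) 1, (Real.exp x - Real.exp (x * t)) / (1 - t) := by
    rw [integral_Ioc_eq_integral_Ioo, integral_Ioc_eq_integral_Ioo]
    refine setIntegral_congr_fun measurableSet_Ioo fun t ht => ?_
    have ht1 : t ≠ 1 := ne_of_lt ht.2
    have h1t : (1:ℝ) - t ≠ 0 := sub_ne_zero.2 (Ne.symm ht1)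
    have hfk : ∀ k : ℕ, f k t
        = (1 - t)⁻¹ * (x ^ (k+1) / (Nat.factorial (k + 1) : ℝ) - (x * t) ^ (k+1) / (Nat.factorial (k + 1) : ℝ)) := by
      intro k
      rw [hf]
      simp only
      rw [geom_sum_eq ht1, mul_pow, show t - 1 = -(1 - t) by ring, div_neg]
      ring
    calc ∑' k, f k t
        = ∑' k, (1 - t)⁻¹ * (x ^ (k+1) / (Nat.factorial (k + 1) : ℝ) - (x * t) ^ (k+1) / (Nat.factorial (k + 1) : ℝ)) :=
          tsum_congr hfk
      _ = (1 - t)⁻¹ * ((Real.exp x - 1) - (Real.exp (x * t) - 1)) := by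
          rw [tsum_mul_left, Summable.tsum_sub (summable_shift x) (summable_shift (x * t)),
            tsum_exp_sub_one, tsum_exp_sub_one]
      _ = (Real.exp x - Real.exp (x * t)) / (1 - t) := by
          rw [eq_div_iff h1t]
          field_simp
          ring
  rw [hinner, ← intervalIntegral.integral_of_le zero_le_one]
  have key : ∫ t in (0:ℝ)..1, (Real.exp x - Real.exp (x * t)) / (1 - t)
      = ∫ u in (0:ℝ)..x, (Real.exp x - Real.exp (x - u)) / u := by
    have e1 : ∀ t : ℝ, (Real.exp x - Real.exp (x * t)) / (1 - t)
        = x * ((Real.exp x - Real.exp (x - x * (1 - t))) / (x * (1 - t))) := by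
      intro t
      rcases eq_or_ne t 1 with rfl | ht1
      · simp
      · have h1t : (1:ℝ) - t ≠ 0 := sub_ne_zero.2 (Ne.symm ht1)
        rw [show x - x * (1 - t) = x * t by ring]
        field_simp
    calc ∫ t in (0:ℝ)..1, (Real.exp x - Real.exp (x * t)) / (1 - t)
        = ∫ t in (0:ℝ)..1, x * ((Real.exp x - Real.exp (x - x * (1 - t))) / (x * (1 - t))) := by
          simp only [e1]
      _ = x * ∫ t in (0:ℝ)..1, (Real.exp x - Real.exp (x - x * (1 - t))) / (x * (1 - t)) :=
          intervalIntegral.integral_const_mul _ _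
      _ = x * ∫ s in (0:ℝ)..1, (Real.exp x - Real.exp (x - x * s)) / (x * s) := by
          rw [intervalIntegral.integral_comp_sub_left
            (fun s => (Real.exp x - Real.exp (x - x * s)) / (x * s)) 1]
          norm_num
      _ = x * (x⁻¹ • ∫ u in (x * 0:ℝ)..(x * 1), (Real.exp x - Real.exp (x - u)) / u) := by
          rw [intervalIntegral.integral_comp_mul_left
            (fun u => (Real.exp x - Real.exp (x - u)) / u) hx.ne']
      _ = ∫ u in (0:ℝ)..x, (Real.exp x - Real.exp (x - u)) / u := by
          rw [smul_eq_mul, mul_zero, mul_one, ← mul_assoc, mul_inv_cancel₀ hx.ne', one_mul]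
  rw [key]
  have e2 : ∀ u : ℝ, (Real.exp x - Real.exp (x - u)) / u
      = Real.exp x * ((1 - Real.exp (-u)) / u) := by
    intro u
    rw [show x - u = x + (-u) by ring, Real.exp_add,
      show Real.exp x - Real.exp x * Real.exp (-u) = Real.exp x * (1 - Real.exp (-u)) by ring,
      mul_div_assoc]
  simp only [e2]
  rw [intervalIntegral.integral_const_mul, intervalIntegral.integral_of_le hx.le, I_eq hx]
end

section
/- For all real x > 0, ∑_{k=1}^∞ H_k x^k / k! = e^x ∫_0^x (1 - e^{-t})/t dt, where H_k is the k-th harmonic number. -/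
open Real MeasureTheory

lemma H_nonneg (m : ℕ) : 0 ≤ H m :=
  Finset.sum_nonneg fun j _ => by positivity

lemma H_le (m : ℕ) : H m ≤ m := by
  calc H m ≤ ∑ _j ∈ Finset.range m, (1 : ℝ) := by
        refine Finset.sum_le_sum fun j _ => ?_
        rw [div_le_one (by positivity)]
        have : (0:ℝ) ≤ (j:ℝ) := Nat.cast_nonneg j
        linarith
    _ = m := by simp

lemma real_exp_tsum (y : ℝ) : Real.exp y = ∑' n : ℕ, y ^ n / n.factorial := by
  rw [Real.exp_eq_exp_ℝ, NormedSpace.exp_eq_tsum_div]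

lemma summable_H_mul (x : ℝ) (hx : 0 < x) :
    Summable (fun m : ℕ => H m * x ^ m / m.factorial) := by
  apply Summable.of_nonneg_of_le (f := fun m : ℕ => (2 * x) ^ m / m.factorial)
  · intro m
    exact div_nonneg (mul_nonneg (H_nonneg m) (by positivity)) (by positivity)
  · intro m
    have h1 : H m * x ^ m ≤ (2:ℝ) ^ m * x ^ m := by
      apply mul_le_mul_of_nonneg_right _ (by positivity)
      calc H m ≤ m := H_le m
        _ ≤ (2:ℝ) ^ m := by
            exact_mod_cast (Nat.lt_two_pow_self (n := m)).le
    calc H m * x ^ m / m.factorial ≤ (2:ℝ) ^ m * x ^ m / m.factorial := by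
          apply div_le_div_of_nonneg_right h1 (by positivity) |>.trans_eq rfl
      _ = (2 * x) ^ m / m.factorial := by rw [mul_pow]
  · exact Real.summable_pow_div_factorial (2 * x)

theorem egf_harmonic_integral (x : ℝ) (hx : 0 < x) :
    ∑' k : ℕ, H (k + 1) * x ^ (k + 1) / (Nat.factorial (k + 1)) =
      Real.exp x * ∫ t in (0 : ℝ)..x, (1 - Real.exp (-t)) / t := by
  set P : ℕ → ℝ → ℝ := fun m t =>
    ((m.factorial : ℝ))⁻¹ * ∑ j ∈ Finset.range m, x ^ j * (x - t) ^ (m - 1 - j) with hPdef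
  -- pointwise series identity on Ioo 0 x
  have key : ∀ t ∈ Set.Ioo (0:ℝ) x,
      Real.exp x * ((1 - Real.exp (-t)) / t) = ∑' m : ℕ, P m t := by
    intro t ht
    have ht0 : t ≠ 0 := ne_of_gt ht.1
    have h1 : Real.exp x * (1 - Real.exp (-t)) = Real.exp x - Real.exp (x - t) := by
      rw [mul_sub, mul_one, ← Real.exp_add]; ring_nf
    have h2 : Real.exp x - Real.exp (x - t)
        = ∑' m : ℕ, (x ^ m - (x - t) ^ m) / m.factorial := by
      rw [real_exp_tsum, real_exp_tsum,
        ← Summable.tsum_sub (Real.summable_pow_div_factorial x)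
          (Real.summable_pow_div_factorial (x - t))]
      simp_rw [sub_div]
    have h3 : ∀ m : ℕ, (x ^ m - (x - t) ^ m) / (m.factorial : ℝ) = t * P m t := by
      intro m
      have hg := geom_sum₂_mul x (x - t) m
      have : x - (x - t) = t := by ring
      rw [this] at hg
      rw [← hg, hPdef]
      field_simp
    have h0 : Real.exp x * ((1 - Real.exp (-t)) / t) = (Real.exp x - Real.exp (x - t)) / t := by
      rw [← h1]; ring
    rw [h0, h2]
    simp_rw [h3]
    rw [tsum_mul_left, mul_div_assoc, mul_comm, div_mul_cancel₀ _ ht0]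
  -- each P m is nonnegative on Ioo 0 x
  have hPnonneg : ∀ m : ℕ, ∀ t ∈ Set.Ioo (0:ℝ) x, 0 ≤ P m t := by
    intro m t ht
    apply mul_nonneg (by positivity)
    apply Finset.sum_nonneg
    intro j _
    have : 0 ≤ x - t := by linarith [ht.2]
    positivity
  -- integrability
  have hPint : ∀ m : ℕ, IntegrableOn (P m) (Set.Ioo 0 x) := by
    intro m
    apply (integrableOn_Ioc_iff_integrableOn_Ioo).mp
    apply Continuous.integrableOn_Ioc
    fun_prop
  -- per-term integral
  have hint : ∀ m : ℕ, ∫ t in Set.Ioo (0:ℝ) x, P m t = H m * x ^ m / m.factorial := by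
    intro m
    have hpow : ∀ p : ℕ, ∫ t in Set.Ioo (0:ℝ) x, (x - t) ^ p = x ^ (p+1) / (p+1) := by
      intro p
      rw [← integral_Ioc_eq_integral_Ioo, ← intervalIntegral.integral_of_le hx.le,
        intervalIntegral.integral_comp_sub_left (fun t => t ^ p) x]
      simp [integral_pow]
    rw [hPdef]
    simp only
    rw [integral_const_mul, integral_finset_sum _ (fun j _ => by
      apply Integrable.const_mul
      apply (integrableOn_Ioc_iff_integrableOn_Ioo).mp
      apply Continuous.integrableOn_Ioc
      fun_prop)]
    simp_rw [integral_const_mul, hpow]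
    have hterm : ∀ j ∈ Finset.range m,
        x ^ j * (x ^ (m - 1 - j + 1) / ((m - 1 - j : ℕ) + 1)) = x ^ m * (1 / ((m - j : ℕ) : ℝ)) := by
      intro j hj
      have hj' : j < m := Finset.mem_range.mp hj
      have e1 : m - 1 - j + 1 = m - j := by omega
      have e2 : ((m - 1 - j : ℕ) : ℝ) + 1 = ((m - j : ℕ) : ℝ) := by
        have : (m - 1 - j) + 1 = m - j := by omega
        exact_mod_cast congrArg (Nat.cast (R := ℝ)) this
      have e3 : j + (m - j) = m := by omega
      rw [e1, e2, mul_div_assoc', ← pow_add, e3, mul_one_div]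
    rw [Finset.sum_congr rfl hterm, ← Finset.mul_sum]
    have hH : ∑ j ∈ Finset.range m, (1 : ℝ) / ((m - j : ℕ) : ℝ) = H m := by
      rw [← Finset.sum_range_reflect]
      refine Finset.sum_congr rfl fun j hj => ?_
      have hj' : j < m := Finset.mem_range.mp hj
      have : m - (m - 1 - j) = j + 1 := by omega
      rw [this]
      push_cast
      ring
    rw [hH]
    ring
  -- norm integrals summable
  have hnorm : ∀ m : ℕ, ∫ t in Set.Ioo (0:ℝ) x, ‖P m t‖ = H m * x ^ m / m.factorial := by
    intro m
    rw [← hint m]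
    apply setIntegral_congr_fun measurableSet_Ioo
    intro t ht
    exact Real.norm_of_nonneg (hPnonneg m t ht)
  -- assemble
  have h4 : Real.exp x * ∫ t in (0:ℝ)..x, (1 - Real.exp (-t)) / t
      = ∫ t in Set.Ioo (0:ℝ) x, ∑' m : ℕ, P m t := by
    rw [intervalIntegral.integral_of_le hx.le, integral_Ioc_eq_integral_Ioo,
      ← integral_const_mul]
    exact setIntegral_congr_fun measurableSet_Ioo key
  rw [h4, ← MeasureTheory.integral_tsum_of_summable_integral_norm hPint (by
    simp_rw [hnorm]
    exact summable_H_mul x hx)]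
  simp_rw [hint]
  have hsum := summable_H_mul x hx
  rw [hsum.tsum_eq_zero_add]
  have : H 0 * x ^ 0 / (Nat.factorial 0) = 0 := by simp [H]
  rw [this, zero_add]
end

section
/- The m-th cumulant of the number of cycles C_n of a uniformly random permutation of n elements is κ_m = ∑_{ℓ=1}^m (-1)^{ℓ-1} (ℓ-1)! S(m,ℓ) p_ℓ(n), where S(m,ℓ) are Stirling numbers of the second kind and p_ℓ(n) = ∑_{i=1}^n 1/i^ℓ; in particular κ_1 = H_n and κ_2 = H_n - ∑_{i=1}^n 1/i^2. -/
/-- Stirling numbers of the second kind. -/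
def stirlingSecond : ℕ → ℕ → ℕ
  | 0, 0 => 1
  | 0, _ + 1 => 0
  | _ + 1, 0 => 0
  | n + 1, k + 1 => (k + 1) * stirlingSecond n (k + 1) + stirlingSecond n k

/-- The power sum `p_ℓ(n) = ∑_{i=1}^n 1/i^ℓ`. -/
noncomputable def psum (n ℓ : ℕ) : ℝ := ∑ i ∈ Finset.range n, (1 / (i + 1 : ℝ)) ^ ℓ

/-- The cumulant generating function of the number of cycles `C_n` of a uniformly
random permutation of `n` elements: `log E[e^{t C_n}] = ∑_{i=1}^n log (1 + (e^t - 1)/i)`. -/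
noncomputable def cgf (n : ℕ) (t : ℝ) : ℝ :=
  ∑ i ∈ Finset.range n, Real.log (1 + (Real.exp t - 1) / (i + 1))


lemma stirling_zero_of_lt : ∀ m ℓ : ℕ, m < ℓ → stirlingSecond m ℓ = 0 := by
  intro m
  induction m with
  | zero => intro ℓ h; cases ℓ with
      | zero => omega
      | succ k => rfl
  | succ n ih => intro ℓ h; cases ℓ with
      | zero => omega
      | succ k => simp [stirlingSecond, ih (k+1) (by omega), ih k (by omega)]

lemma stirling_one : ∀ m : ℕ, 1 ≤ m → stirlingSecond m 1 = 1 := by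
  intro m
  induction m with
  | zero => omega
  | succ n ih =>
    intro _
    cases n with
    | zero => rfl
    | succ k =>
        have : stirlingSecond (k+2) 1 = 1 * stirlingSecond (k+1) 1 + stirlingSecond (k+1) 0 := rfl
        rw [this, ih (by omega)]
        have : stirlingSecond (k+1) 0 = 0 := rfl
        rw [this]

noncomputable def acoef (m ℓ : ℕ) : ℝ :=
  (-1 : ℝ) ^ (ℓ - 1) * (Nat.factorial (ℓ - 1)) * stirlingSecond m ℓ

lemma acoef_zero (m : ℕ) (hm : 1 ≤ m) : acoef m 0 = 0 := by
  cases m with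
  | zero => omega
  | succ k => simp [acoef, stirlingSecond]

lemma acoef_rec (m ℓ : ℕ) (hm : 1 ≤ m) :
    acoef (m+1) (ℓ+1) = (ℓ+1) * acoef m (ℓ+1) - ℓ * acoef m ℓ := by
  cases ℓ with
  | zero =>
    simp [acoef, stirling_one m hm, stirling_one (m+1) (by omega)]
  | succ k =>
    have hst : stirlingSecond (m+1) (k+2) =
        (k+2) * stirlingSecond m (k+2) + stirlingSecond m (k+1) := rfl
    simp only [acoef, hst, Nat.add_sub_cancel]
    push_cast [Nat.factorial_succ]
    ring_nf

lemma acoef_zero_of_lt (m ℓ : ℕ) (h : m < ℓ) : acoef m ℓ = 0 := by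
  simp [acoef, stirling_zero_of_lt m ℓ h]

noncomputable def gfun (p t : ℝ) : ℝ := p * Real.exp t / (1 + p * (Real.exp t - 1))

lemma Dpos (p : ℝ) (hp0 : 0 < p) (hp1 : p ≤ 1) (t : ℝ) :
    0 < 1 + p * (Real.exp t - 1) := by nlinarith [Real.exp_pos t]

lemma hasDerivAt_D (p t : ℝ) :
    HasDerivAt (fun t => 1 + p * (Real.exp t - 1)) (p * Real.exp t) t := by
  simpa using ((Real.hasDerivAt_exp t).sub_const 1).const_mul p |>.const_add 1

lemma hasDerivAt_log_D (p : ℝ) (hp0 : 0 < p) (hp1 : p ≤ 1) (t : ℝ) :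
    HasDerivAt (fun t => Real.log (1 + p * (Real.exp t - 1))) (gfun p t) t :=
  (hasDerivAt_D p t).log (ne_of_gt (Dpos p hp0 hp1 t))

lemma hasDerivAt_gfun (p : ℝ) (hp0 : 0 < p) (hp1 : p ≤ 1) (t : ℝ) :
    HasDerivAt (gfun p) (gfun p t - (gfun p t) ^ 2) t := by
  have hD := Dpos p hp0 hp1 t
  have h := ((Real.hasDerivAt_exp t).const_mul p).div (hasDerivAt_D p t) (ne_of_gt hD)
  refine h.congr_deriv ?_
  unfold gfun
  field_simp

lemma hasDerivAt_gpow (p : ℝ) (hp0 : 0 < p) (hp1 : p ≤ 1) (t : ℝ) (ℓ : ℕ) :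
    HasDerivAt (fun t => (gfun p t) ^ ℓ)
      (ℓ * (gfun p t) ^ ℓ - ℓ * (gfun p t) ^ (ℓ + 1)) t := by
  have h := (hasDerivAt_gfun p hp0 hp1 t).pow ℓ
  refine h.congr_deriv ?_
  cases ℓ with
  | zero => simp
  | succ k =>
    simp only [Nat.add_sub_cancel, pow_succ]
    ring

lemma sum_identity (m : ℕ) (hm : 1 ≤ m) (x : ℝ) :
    ∑ ℓ ∈ Finset.range (m + 1), acoef m ℓ * ((ℓ : ℝ) * x ^ ℓ - (ℓ : ℝ) * x ^ (ℓ + 1)) =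
    ∑ ℓ ∈ Finset.range (m + 2), acoef (m + 1) ℓ * x ^ ℓ := by
  rw [Finset.sum_range_succ' (fun ℓ => acoef (m + 1) ℓ * x ^ ℓ) (m + 1)]
  rw [acoef_zero (m + 1) (by omega)]
  have hrec : ∀ i ∈ Finset.range (m + 1),
      acoef (m + 1) (i + 1) * x ^ (i + 1) =
      ((i : ℝ) + 1) * acoef m (i + 1) * x ^ (i + 1) - (i : ℝ) * acoef m i * x ^ (i + 1) := by
    intro i _
    rw [acoef_rec m i hm]
    ring
  rw [Finset.sum_congr rfl hrec, Finset.sum_sub_distrib]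
  have h1 : ∑ i ∈ Finset.range (m + 1), ((i : ℝ) + 1) * acoef m (i + 1) * x ^ (i + 1)
      = ∑ ℓ ∈ Finset.range (m + 1), (ℓ : ℝ) * acoef m ℓ * x ^ ℓ := by
    have h2 := Finset.sum_range_succ' (fun ℓ => (ℓ : ℝ) * acoef m ℓ * x ^ ℓ) (m + 1)
    have h3 := Finset.sum_range_succ (fun ℓ => (ℓ : ℝ) * acoef m ℓ * x ^ ℓ) (m + 1)
    rw [acoef_zero_of_lt m (m + 1) (by omega)] at h3
    simp only [mul_zero, zero_mul, add_zero, Nat.cast_zero, Nat.cast_add, Nat.cast_one,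
      pow_zero, mul_one] at h2 h3
    rw [← h3, h2]
  rw [h1, ← Finset.sum_sub_distrib, zero_mul, add_zero]
  apply Finset.sum_congr rfl
  intro ℓ _
  ring

lemma p_pos (i : ℕ) : 0 < 1 / ((i : ℝ) + 1) := by positivity

lemma p_le_one (i : ℕ) : 1 / ((i : ℝ) + 1) ≤ 1 := by
  rw [div_le_one (by positivity)]
  linarith [Nat.cast_nonneg (α := ℝ) i]

lemma cgf_eq (n : ℕ) : cgf n = fun t => ∑ i ∈ Finset.range n,
    Real.log (1 + (1 / ((i : ℝ) + 1)) * (Real.exp t - 1)) := by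
  funext t
  unfold cgf
  apply Finset.sum_congr rfl
  intro i _
  congr 1
  ring

lemma key (n : ℕ) : ∀ m, 1 ≤ m → iteratedDeriv m (cgf n) =
    fun t => ∑ i ∈ Finset.range n, ∑ ℓ ∈ Finset.range (m + 1),
      acoef m ℓ * (gfun (1 / ((i : ℝ) + 1)) t) ^ ℓ := by
  intro m
  induction m with
  | zero => omega
  | succ k ih =>
    intro _
    rcases Nat.eq_zero_or_pos k with hk | hk
    · subst hk
      rw [iteratedDeriv_one]
      funext t
      have hd : HasDerivAt (cgf n)
          (∑ i ∈ Finset.range n, gfun (1 / ((i : ℝ) + 1)) t) t := by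
        rw [cgf_eq]
        exact HasDerivAt.fun_sum fun i _ => hasDerivAt_log_D _ (p_pos i) (p_le_one i) t
      rw [hd.deriv]
      apply Finset.sum_congr rfl
      intro i _
      rw [Finset.sum_range_succ, Finset.sum_range_one]
      have h10 : acoef 1 0 = 0 := acoef_zero 1 le_rfl
      have h11 : acoef 1 1 = 1 := by norm_num [acoef, stirlingSecond]
      rw [h10, h11]
      ring
    · rw [iteratedDeriv_succ, ih hk]
      funext t
      have hd : HasDerivAt (fun t => ∑ i ∈ Finset.range n, ∑ ℓ ∈ Finset.range (k + 1),
          acoef k ℓ * (gfun (1 / ((i : ℝ) + 1)) t) ^ ℓ)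
          (∑ i ∈ Finset.range n, ∑ ℓ ∈ Finset.range (k + 1),
            acoef k ℓ * ((ℓ : ℝ) * (gfun (1 / ((i : ℝ) + 1)) t) ^ ℓ -
              (ℓ : ℝ) * (gfun (1 / ((i : ℝ) + 1)) t) ^ (ℓ + 1))) t :=
        HasDerivAt.fun_sum fun i _ => HasDerivAt.fun_sum fun ℓ _ =>
          (hasDerivAt_gpow _ (p_pos i) (p_le_one i) t ℓ).const_mul _
      rw [hd.deriv]
      apply Finset.sum_congr rfl
      intro i _
      exact sum_identity k hk _

lemma main_eval (n m : ℕ) (hm : 1 ≤ m) :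
    iteratedDeriv m (cgf n) 0 = ∑ ℓ ∈ Finset.Icc 1 m,
      (-1 : ℝ) ^ (ℓ - 1) * (Nat.factorial (ℓ - 1)) * stirlingSecond m ℓ * psum n ℓ := by
  have h := congrFun (key n m hm) 0
  rw [h]
  have hg : ∀ i : ℕ, gfun (1 / ((i : ℝ) + 1)) 0 = 1 / ((i : ℝ) + 1) := by
    intro i
    have : (1 : ℝ) + (i : ℝ) ≠ 0 := by positivity
    simp [gfun]
  simp only [hg]
  rw [Finset.sum_comm]
  have hcol : ∀ ℓ ∈ Finset.range (m + 1),
      (∑ i ∈ Finset.range n, acoef m ℓ * (1 / ((i : ℝ) + 1)) ^ ℓ)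
      = acoef m ℓ * psum n ℓ := by
    intro ℓ _
    rw [← Finset.mul_sum, psum]
  rw [Finset.sum_congr rfl hcol]
  rw [← Finset.sum_subset (show Finset.Icc 1 m ⊆ Finset.range (m + 1) by
      intro x hx
      simp only [Finset.mem_Icc] at hx
      simp only [Finset.mem_range]
      omega)
    (by
      intro x hx hnx
      simp only [Finset.mem_range] at hx
      simp only [Finset.mem_Icc] at hnx
      have : x = 0 := by omega
      subst this
      rw [acoef_zero m hm, zero_mul])]
  apply Finset.sum_congr rfl
  intro ℓ _
  simp only [acoef]

theorem cumulant_cycles (n m : ℕ) (hm : 1 ≤ m) :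
    iteratedDeriv m (cgf n) 0 =
      ∑ ℓ ∈ Finset.Icc 1 m,
        (-1 : ℝ) ^ (ℓ - 1) * (Nat.factorial (ℓ - 1)) * stirlingSecond m ℓ * psum n ℓ ∧
    iteratedDeriv 1 (cgf n) 0 = psum n 1 ∧
    iteratedDeriv 2 (cgf n) 0 = psum n 1 - psum n 2 := by
  refine ⟨main_eval n m hm, ?_, ?_⟩
  · rw [main_eval n 1 le_rfl]
    have : stirlingSecond 1 1 = 1 := by decide
    simp [this]
  · rw [main_eval n 2 (by norm_num)]
    have h1 : stirlingSecond 2 1 = 1 := by decide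
    have h2 : stirlingSecond 2 2 = 1 := by decide
    have : Finset.Icc 1 2 = {1, 2} := by decide
    rw [this]
    rw [Finset.sum_insert (by decide), Finset.sum_singleton]
    rw [h1, h2]
    norm_num
    ring
end
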